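/- Gradient consensus-error bound: Let E be a real inner product space, N ≥ 1, P : E → E nonexpansive, c ≥ 0, and let Q be an N×N real matrix with |Q_{ij} − 1/N| ≤ c for all i, j. Let f^1, …, f^N : E → ℝ each be L-smooth. Given z^1, …, z^N ∈ E, define y^i := ∑_{j=1}^N Q_{ij} z^j, x^i := P(y^i), and x̄ := (1/N)∑_{i=1}^N x^i. Then ‖(1/N)∑_{i=1}^N (∇f^i(x^i) − ∇f^i(x̄))‖ ≤ 2Lc·∑_{j=1}^N ‖z^j‖. -/

import Mathlib

/-- `f` has gradient `g` at `x` (stated via the Fréchet derivative and the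
canonical map to the dual, so that completeness of `E` is not needed). -/
def HasGradAt {E : Type*} [NormedAddCommGroup E] [InnerProductSpace ℝ E]
    (f : E → ℝ) (g : E) (x : E) : Prop :=
  HasFDerivAt f (InnerProductSpace.toDualMap ℝ E g) x

/-- Gradient consensus-error bound. -/
theorem gradient_consensus_error_bound
    {E : Type*} [NormedAddCommGroup E] [InnerProductSpace ℝ E]
    (N : ℕ) (hN : 1 ≤ N)
    (P : E → E) (hP : ∀ x y, ‖P x - P y‖ ≤ ‖x - y‖)
    (c : ℝ) (hc : 0 ≤ c)
    (Q : Fin N → Fin N → ℝ) (hQ : ∀ i j, |Q i j - 1 / N| ≤ c)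
    (L : ℝ) (f : Fin N → E → ℝ) (f' : Fin N → E → E)
    (hdiff : ∀ i x, HasGradAt (f i) (f' i x) x)
    (hsmooth : ∀ i x y, ‖f' i x - f' i y‖ ≤ L * ‖x - y‖)
    (z y x : Fin N → E)
    (hy : ∀ i, y i = ∑ j, Q i j • z j)
    (hx : ∀ i, x i = P (y i)) :
    ‖(N : ℝ)⁻¹ • ∑ i, (f' i (x i) - f' i ((N : ℝ)⁻¹ • ∑ j, x j))‖ ≤
      2 * L * c * ∑ j, ‖z j‖ := by
  set xbar : E := (N : ℝ)⁻¹ • ∑ j, x j with hxbar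
  have hN0 : (N : ℝ) ≠ 0 := Nat.cast_ne_zero.mpr (by omega)
  have hNpos : (0:ℝ) < N := by positivity
  have hSnn : 0 ≤ ∑ j, ‖z j‖ := Finset.sum_nonneg fun _ _ => norm_nonneg _
  rcases subsingleton_or_nontrivial E with hE | hE
  · have h1 : ((N:ℝ)⁻¹ • ∑ i, (f' i (x i) - f' i xbar) : E) = 0 := Subsingleton.elim _ _
    have h2 : ∑ j, ‖z j‖ = 0 := Finset.sum_eq_zero fun j _ => by
      rw [Subsingleton.elim (z j) (0:E), norm_zero]
    rw [h1, h2, norm_zero, mul_zero]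
  · obtain ⟨u, v, huv⟩ := exists_pair_ne E
    have i0 : Fin N := ⟨0, by omega⟩
    have hL : 0 ≤ L := by
      have h := hsmooth i0 u v
      have hnv : 0 < ‖u - v‖ := by
        rw [norm_pos_iff, sub_ne_zero]; exact huv
      nlinarith [norm_nonneg (f' i0 u - f' i0 v)]
    have hA : ∀ i j, ‖y i - y j‖ ≤ 2 * c * ∑ k, ‖z k‖ := by
      intro i j
      have hrw : y i - y j = ∑ k, (Q i k - Q j k) • z k := by
        rw [hy i, hy j, ← Finset.sum_sub_distrib]
        simp [sub_smul]
      rw [hrw]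
      calc ‖∑ k, (Q i k - Q j k) • z k‖ ≤ ∑ k, ‖(Q i k - Q j k) • z k‖ :=
            norm_sum_le _ _
        _ ≤ ∑ k, (2*c) * ‖z k‖ := by
            apply Finset.sum_le_sum
            intro k _
            rw [norm_smul, Real.norm_eq_abs]
            apply mul_le_mul_of_nonneg_right _ (norm_nonneg _)
            have h1 := hQ i k
            have h2 := hQ j k
            calc |Q i k - Q j k| = |(Q i k - 1/N) - (Q j k - 1/N)| := by ring_nf
              _ ≤ |Q i k - 1/N| + |Q j k - 1/N| := abs_sub _ _
              _ ≤ 2*c := by linarith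
        _ = 2*c * ∑ k, ‖z k‖ := by rw [Finset.mul_sum]
    have hB : ∀ i, ‖x i - xbar‖ ≤ 2 * c * ∑ k, ‖z k‖ := by
      intro i
      have hrw : x i - xbar = (N:ℝ)⁻¹ • ∑ j, (x i - x j) := by
        rw [hxbar, Finset.sum_sub_distrib, smul_sub, Finset.sum_const,
          Finset.card_fin, ← Nat.cast_smul_eq_nsmul ℝ, smul_smul,
          inv_mul_cancel₀ hN0, one_smul]
      rw [hrw, norm_smul, Real.norm_eq_abs, abs_of_nonneg (by positivity)]
      calc (N:ℝ)⁻¹ * ‖∑ j, (x i - x j)‖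
          ≤ (N:ℝ)⁻¹ * ∑ j, ‖x i - x j‖ := by
            gcongr
            exact norm_sum_le _ _
        _ ≤ (N:ℝ)⁻¹ * ∑ j : Fin N, (2 * c * ∑ k, ‖z k‖) := by
            gcongr with j _
            rw [hx i, hx j]
            exact (hP _ _).trans (hA i j)
        _ = 2 * c * ∑ k, ‖z k‖ := by
            rw [Finset.sum_const, Finset.card_fin, nsmul_eq_mul]
            field_simp
    calc ‖(N:ℝ)⁻¹ • ∑ i, (f' i (x i) - f' i xbar)‖
        = (N:ℝ)⁻¹ * ‖∑ i, (f' i (x i) - f' i xbar)‖ := by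
          rw [norm_smul, Real.norm_eq_abs, abs_of_nonneg (by positivity)]
      _ ≤ (N:ℝ)⁻¹ * ∑ i, ‖f' i (x i) - f' i xbar‖ := by
          gcongr
          exact norm_sum_le _ _
      _ ≤ (N:ℝ)⁻¹ * ∑ _i : Fin N, (L * (2 * c * ∑ k, ‖z k‖)) := by
          gcongr with i _
          calc ‖f' i (x i) - f' i xbar‖ ≤ L * ‖x i - xbar‖ := hsmooth i _ _
            _ ≤ L * (2 * c * ∑ k, ‖z k‖) := mul_le_mul_of_nonneg_left (hB i) hL
      _ = 2 * L * c * ∑ j, ‖z j‖ := by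
          rw [Finset.sum_const, Finset.card_fin, nsmul_eq_mul]
          field_simp
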